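/- Let F₁ ≠ F₂ be points in the Euclidean plane and O the midpoint of F₁F₂. Let A and B be two distinct points on the circle with center F₁ and radius dist F₁ O / √2, such that the line through A and B passes through O. If X is any point on the line AB with dist O X = dist A B, then X lies on the lemniscate of Bernoulli with foci F₁ and F₂, i.e. dist X F₁ * dist X F₂ = (dist F₁ F₂ / 2)^2. -/

import Mathlib

open EuclideanGeometry Real

set_option maxHeartbeats 1000000

/-- Maclaurin-style construction: if `A`, `B` are distinct points of the circle with
center `F₁` and radius `|F₁O|/√2` whose line passes through `O`, and `X` is a point
of this line with `|OX| = |AB|`, then `X` lies on the lemniscate of Bernoulli with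
foci `F₁`, `F₂`. -/
theorem secant_construction_mem_lemniscate
    (F₁ F₂ O A B X : EuclideanSpace ℝ (Fin 2))
    (hF : F₁ ≠ F₂)
    (hO : O = midpoint ℝ F₁ F₂)
    (hAB : A ≠ B)
    (hA : dist F₁ A = dist F₁ O / Real.sqrt 2)
    (hB : dist F₁ B = dist F₁ O / Real.sqrt 2)
    (hOline : O ∈ affineSpan ℝ ({A, B} : Set (EuclideanSpace ℝ (Fin 2))))
    (hXline : X ∈ affineSpan ℝ ({A, B} : Set (EuclideanSpace ℝ (Fin 2))))
    (hOX : dist O X = dist A B) :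
    dist X F₁ * dist X F₂ = (dist F₁ F₂ / 2) ^ 2 := by
  obtain ⟨r, hr⟩ := (vadd_left_mem_affineSpan_pair (k := ℝ)).mp
    (show (O -ᵥ A) +ᵥ A ∈ line[ℝ, A, B] by rwa [vsub_vadd])
  obtain ⟨s, hs⟩ := (vadd_left_mem_affineSpan_pair (k := ℝ)).mp
    (show (X -ᵥ A) +ᵥ A ∈ line[ℝ, A, B] by rwa [vsub_vadd])
  -- hr : r • (B -ᵥ A) = O -ᵥ A, hs : s • (B -ᵥ A) = X -ᵥ A
  set a : ℝ := dist F₁ O with ha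
  set u : EuclideanSpace ℝ (Fin 2) := B - A with hu
  set w : EuclideanSpace ℝ (Fin 2) := A - F₁ with hw
  have ha0 : 0 ≤ a := dist_nonneg
  have hr' : r • u = O - A := hr
  have hs' : s • u = X - A := hs
  have hune : ‖u‖ ≠ 0 := by
    simp only [hu, ne_eq, norm_eq_zero, sub_eq_zero]
    exact fun h => hAB h.symm
  set U : ℝ := ‖u‖^2 with hU
  set P : ℝ := inner ℝ w u with hP
  set N : ℝ := ‖w‖^2 with hN
  have sqrt2 : (Real.sqrt 2)^2 = 2 := Real.sq_sqrt (by norm_num)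
  have e1 : N = a^2/2 := by
    have : ‖w‖ = a / Real.sqrt 2 := by
      rw [hw, ← dist_eq_norm, dist_comm]; exact hA
    rw [hN, this, div_pow, sqrt2]
  have e2 : N + 2*P + U = a^2/2 := by
    have h : ‖w + u‖ = a / Real.sqrt 2 := by
      have : w + u = B - F₁ := by rw [hw, hu]; abel
      rw [this, ← dist_eq_norm, dist_comm]; exact hB
    have h2 : ‖w + u‖^2 = a^2/2 := by rw [h, div_pow, sqrt2]
    have h3 : ‖w + u‖^2 = N + 2*P + U := by
      rw [hN, hU, hP, ← real_inner_self_eq_norm_sq, ← real_inner_self_eq_norm_sq,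
        ← real_inner_self_eq_norm_sq]
      simp [inner_add_left, inner_add_right, real_inner_comm w u, -inner_self_eq_norm_sq_to_K]
      ring
    linarith [h2, h3]
  have hOv : O = r • u + A := sub_eq_iff_eq_add.mp hr'.symm
  have hXv : X = s • u + A := sub_eq_iff_eq_add.mp hs'.symm
  have e3 : N + 2*r*P + r^2*U = a^2 := by
    have h : ‖w + r • u‖ = a := by
      have : w + r • u = O - F₁ := by rw [hw, hOv]; abel
      rw [this, ← dist_eq_norm, dist_comm]
    have h2 : ‖w + r • u‖^2 = N + 2*r*P + r^2*U := by
      rw [hN, hU, hP, ← real_inner_self_eq_norm_sq, ← real_inner_self_eq_norm_sq,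
        ← real_inner_self_eq_norm_sq]
      simp [inner_add_left, inner_add_right, real_inner_smul_left, real_inner_smul_right,
        real_inner_comm w u, -inner_self_eq_norm_sq_to_K]
      ring
    rw [h] at h2; linarith
  have e4 : (s - r)^2 = 1 := by
    have hXO : X - O = (s - r) • u := by
      rw [hXv, hOv, sub_smul]; abel
    have h1 : dist O X = |s - r| * ‖u‖ := by
      rw [dist_comm, dist_eq_norm, hXO, norm_smul, Real.norm_eq_abs]
    have h2 : dist A B = ‖u‖ := by rw [dist_eq_norm, hu, norm_sub_rev]
    have habs : |s - r| = 1 := by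
      have h3 : |s - r| * ‖u‖ = 1 * ‖u‖ := by rw [one_mul, ← h1, ← h2]; exact hOX
      exact mul_right_cancel₀ hune h3
    calc (s-r)^2 = |s-r|^2 := (sq_abs _).symm
    _ = 1 := by rw [habs]; norm_num
  have hXF1 : X - F₁ = w + s • u := by rw [hXv, hw]; abel
  have hXF2 : X - F₂ = (s - 2*r) • u - w := by
    have hsum : F₁ + F₂ = O + O := by rw [hO, midpoint_add_self]
    have hF2v : F₂ = O + O - F₁ := eq_sub_of_add_eq' hsum
    rw [hXv, hF2v, hOv, hw]
    module
  have d1 : dist X F₁ = ‖w + s • u‖ := by rw [dist_eq_norm, hXF1]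
  have d2 : dist X F₂ = ‖(s - 2*r) • u - w‖ := by rw [dist_eq_norm, hXF2]
  have n1 : ‖w + s • u‖^2 = N + 2*s*P + s^2*U := by
    rw [hN, hU, hP, ← real_inner_self_eq_norm_sq, ← real_inner_self_eq_norm_sq,
      ← real_inner_self_eq_norm_sq]
    simp [inner_add_left, inner_add_right, real_inner_smul_left, real_inner_smul_right,
      real_inner_comm w u, -inner_self_eq_norm_sq_to_K]
    ring
  have n2 : ‖(s - 2*r) • u - w‖^2 = (s-2*r)^2*U - 2*(s-2*r)*P + N := by
    rw [hN, hU, hP, ← real_inner_self_eq_norm_sq, ← real_inner_self_eq_norm_sq,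
      ← real_inner_self_eq_norm_sq]
    simp [inner_sub_left, inner_sub_right, real_inner_smul_left, real_inner_smul_right,
      real_inner_comm w u, -inner_self_eq_norm_sq_to_K]
    ring
  have hPval : P = -U/2 := by linarith
  have hc : r^2*U - r*U = a^2/2 := by linear_combination e3 - e1 - 2*r*hPval
  have key : (N + 2*s*P + s^2*U) * ((s-2*r)^2*U - 2*(s-2*r)*P + N) = (a^2)^2 := by
    rw [hPval, e1]
    linear_combination (-((s-2*r)^2*U + (s-2*r)*U + a^2/2 + U*(s^2-s+r^2-r))
      + 4*U*(r^2-r) + 2*a^2) * hc + (U^2*(s-r)^2) * e4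
  have hgoal2 : (dist X F₁ * dist X F₂)^2 = (a^2)^2 := by
    rw [d1, d2, mul_pow, n1, n2, key]
  have haF : dist F₁ F₂ / 2 = a := by
    rw [ha, hO, dist_left_midpoint (𝕜 := ℝ)]
    norm_num
    ring
  rw [haF]
  nlinarith [dist_nonneg (x := X) (y := F₁), dist_nonneg (x := X) (y := F₂),
    mul_nonneg (dist_nonneg (x := X) (y := F₁)) (dist_nonneg (x := X) (y := F₂)),
    sq_nonneg a, hgoal2]
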